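/- (Clearance guarantee of the tangent heading.) With p, q, r = dist(p, q), 0 < r_c < r, φ_h = arcsin(r_c/r), u = (q − p)/r, and p_h = p + √(r² − r_c²)·R_{φ_h}(u) as above, every point on the line through p in the direction p_h − p keeps distance at least r_c from q: for all t ∈ ℝ, dist(p + t·(p_h − p), q) ≥ r_c, with equality when t = 1. -/

import Mathlib

/-- Clearance guarantee of the tangent heading: identifying the Euclidean plane with `ℂ`
(rotation by angle `θ` being multiplication by `exp(θ·i)`), with vehicle position `p`,
obstacle point `q` at distance `r = dist p q`, clearance radius `0 < r_c < r`,
`φ_h = arcsin(r_c/r)`, `u = (q − p)/r`, and `p_h = p + √(r² − r_c²)·R_{φ_h}(u)`, every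
point on the line through `p` in direction `p_h − p` keeps distance at least `r_c` from
`q`, with equality at `t = 1`. -/
theorem clearance_heading_line_clears_obstacle
    (p q : ℂ) (r r_c φ_h : ℝ) (u p_h : ℂ)
    (hr : r = dist p q) (hrc : 0 < r_c) (hrcr : r_c < r)
    (hφh : φ_h = Real.arcsin (r_c / r))
    (hu : u = (q - p) / (r : ℂ))
    (hph : p_h = p + (Real.sqrt (r ^ 2 - r_c ^ 2) : ℂ) * (Complex.exp (φ_h * Complex.I) * u)) :
    (∀ t : ℝ, r_c ≤ dist (p + (t : ℂ) * (p_h - p)) q) ∧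
    dist (p + (1 : ℂ) * (p_h - p)) q = r_c := by
  have hr0 : 0 < r := hrc.trans hrcr
  set s : ℝ := Real.sqrt (r ^ 2 - r_c ^ 2) with hs
  have hs2 : s ^ 2 = r ^ 2 - r_c ^ 2 := Real.sq_sqrt (by nlinarith)
  have hs0 : 0 ≤ s := Real.sqrt_nonneg _
  have hsin : Real.sin φ_h = r_c / r := by
    rw [hφh, Real.sin_arcsin]
    · rw [le_div_iff₀ hr0]; nlinarith
    · rw [div_le_one hr0]; linarith
  have hcos : Real.cos φ_h = s / r := by
    rw [hφh, Real.cos_arcsin, hs,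
      show (1 : ℝ) - (r_c / r) ^ 2 = (r ^ 2 - r_c ^ 2) / r ^ 2 by field_simp,
      Real.sqrt_div (by nlinarith), Real.sqrt_sq hr0.le]
  have hexp : Complex.exp (φ_h * Complex.I) =
      ((s / r : ℝ) : ℂ) + ((r_c / r : ℝ) : ℂ) * Complex.I := by
    rw [Complex.exp_mul_I, ← Complex.ofReal_cos, ← Complex.ofReal_sin, hcos, hsin]
  have hrq : ‖q - p‖ = r := by
    rw [hr, dist_comm, Complex.dist_eq]
  have key : ∀ t : ℝ, dist (p + (t : ℂ) * (p_h - p)) q =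
      Real.sqrt (s ^ 2 * (t - 1) ^ 2 + r_c ^ 2) := by
    intro t
    have hfac : p + (t : ℂ) * (p_h - p) - q =
        (((t * s * (s / r) - r : ℝ) : ℂ) + ((t * s * (r_c / r) : ℝ) : ℂ) * Complex.I)
          * ((q - p) / (r : ℂ)) := by
      rw [hph, hu, hexp]
      push_cast
      have : (r : ℂ) ≠ 0 := by exact_mod_cast hr0.ne'
      field_simp
      ring
    rw [Complex.dist_eq, hfac, norm_mul, norm_div, hrq, Complex.norm_real, Real.norm_eq_abs,
      abs_of_pos hr0, div_self hr0.ne', mul_one, Complex.norm_add_mul_I]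
    congr 1
    field_simp
    linear_combination (t ^ 2 * s ^ 2 - r ^ 2) * hs2
  constructor
  · intro t
    rw [key t]
    calc r_c = Real.sqrt (r_c ^ 2) := (Real.sqrt_sq hrc.le).symm
    _ ≤ _ := Real.sqrt_le_sqrt (by nlinarith)
  · rw [show ((1 : ℂ)) = ((1 : ℝ) : ℂ) by norm_num, key 1]
    simp [Real.sqrt_sq hrc.le]
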